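/- For every integer C ≥ 2 and every real number S with 0 ≤ S ≤ log₂ C, there exists exactly one Π ∈ [1/C, 1] such that S_F(Π) = S. (In particular S_F(1/C) = log₂ C and S_F(1) = 0, so the Fano equation S = S_F(Π^max) has a unique solution Π^max in this range.) -/

import Mathlib

/-- The Fano function `S_F(p) = -p·log₂ p - (1-p)·log₂(1-p) + (1-p)·log₂(C-1)`
(with the convention `0·log₂ 0 = 0`, which holds automatically since `Real.logb 2 0 = 0`). -/
noncomputable def fanoFn (C : ℕ) (p : ℝ) : ℝ :=
  -p * Real.logb 2 p - (1 - p) * Real.logb 2 (1 - p) + (1 - p) * Real.logb 2 ((C : ℝ) - 1)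

lemma fanoFn_eq (C : ℕ) (p : ℝ) :
    fanoFn C p = (-(p * Real.log p) - (1 - p) * Real.log (1 - p)
      + (1 - p) * Real.log ((C : ℝ) - 1)) / Real.log 2 := by
  unfold fanoFn Real.logb
  ring

lemma fanoFn_continuous (C : ℕ) : Continuous (fanoFn C) := by
  have h : Continuous fun x : ℝ => x * Real.log x := Real.continuous_mul_log
  have h2 : Continuous fun p : ℝ => 1 - p := continuous_const.sub continuous_id
  have : Continuous fun p : ℝ => (-(p * Real.log p) - (1 - p) * Real.log (1 - p)
      + (1 - p) * Real.log ((C : ℝ) - 1)) / Real.log 2 :=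
    (((h.neg).sub (h.comp h2)).add (h2.mul continuous_const)).div_const _
  convert this using 1
  funext p
  exact fanoFn_eq C p

lemma fanoFn_anti (C : ℕ) (hC : 2 ≤ C) :
    StrictAntiOn (fanoFn C) (Set.Icc (1 / (C : ℝ)) 1) := by
  have hc2 : (2 : ℝ) ≤ (C : ℝ) := by exact_mod_cast hC
  apply strictAntiOn_of_deriv_neg (convex_Icc _ _) (fanoFn_continuous C).continuousOn
  intro x hx
  rw [interior_Icc] at hx
  obtain ⟨hx1, hx2⟩ := hx
  have hx0 : 0 < x := lt_trans (by positivity) hx1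
  have h1x : 0 < 1 - x := by linarith
  have hc1 : (0 : ℝ) < (C : ℝ) - 1 := by linarith
  have hd1 : HasDerivAt (fun p : ℝ => p * Real.log p) (Real.log x + 1) x :=
    Real.hasDerivAt_mul_log hx0.ne'
  have hsub : HasDerivAt (fun p : ℝ => 1 - p) (-1) x := (hasDerivAt_id x).const_sub 1
  have hd2 : HasDerivAt (fun p : ℝ => (1 - p) * Real.log (1 - p))
      (-(Real.log (1 - x) + 1)) x := by
    have := (Real.hasDerivAt_mul_log h1x.ne').comp x hsub
    exact this.congr_deriv (by ring)
  have hd3 : HasDerivAt (fun p : ℝ => (1 - p) * Real.log ((C : ℝ) - 1))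
      (-Real.log ((C : ℝ) - 1)) x := by
    have := hsub.mul_const (Real.log ((C : ℝ) - 1))
    exact this.congr_deriv (by ring)
  have hdf : HasDerivAt (fanoFn C)
      ((-(Real.log x + 1) - -(Real.log (1 - x) + 1) + -Real.log ((C : ℝ) - 1)) / Real.log 2) x := by
    have := ((hd1.neg.sub hd2).add hd3).div_const (Real.log 2)
    have heq : fanoFn C = fun p : ℝ => (-(p * Real.log p) - (1 - p) * Real.log (1 - p)
        + (1 - p) * Real.log ((C : ℝ) - 1)) / Real.log 2 := funext (fanoFn_eq C)
    rw [heq]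
    exact this
  rw [hdf.deriv]
  have hlt : 1 - x < x * ((C : ℝ) - 1) := by
    have hxc : 1 < x * (C : ℝ) := by
      have h := (div_lt_iff₀ (by linarith : (0:ℝ) < (C:ℝ))).mp hx1
      linarith
    nlinarith
  have hlog : Real.log (1 - x) < Real.log x + Real.log ((C : ℝ) - 1) := by
    rw [← Real.log_mul hx0.ne' hc1.ne']
    exact Real.log_lt_log h1x hlt
  have hl2 : 0 < Real.log 2 := Real.log_pos (by norm_num)
  apply div_neg_of_neg_of_pos _ hl2
  linarith

/-- For every integer `C ≥ 2` one has `S_F(1/C) = log₂ C` and `S_F(1) = 0`,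
and for every real `S` with `0 ≤ S ≤ log₂ C` there exists exactly one `Π ∈ [1/C, 1]` with
`S_F(Π) = S`: the Fano equation has a unique solution in this range. -/
theorem stmt_7 (C : ℕ) (hC : 2 ≤ C) :
    fanoFn C (1 / (C : ℝ)) = Real.logb 2 C ∧ fanoFn C 1 = 0 ∧
    ∀ S : ℝ, 0 ≤ S → S ≤ Real.logb 2 C →
      ∃! P : ℝ, P ∈ Set.Icc (1 / (C : ℝ)) 1 ∧ fanoFn C P = S := by
  have hc2 : (2 : ℝ) ≤ (C : ℝ) := by exact_mod_cast hC
  have hc0 : (0 : ℝ) < (C : ℝ) := by linarith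
  have hc1 : (0 : ℝ) < (C : ℝ) - 1 := by linarith
  have hab : 1 / (C : ℝ) ≤ 1 := by
    rw [div_le_one hc0]; linarith
  have hone : fanoFn C 1 = 0 := by
    unfold fanoFn
    simp
  have hval : fanoFn C (1 / (C : ℝ)) = Real.logb 2 C := by
    unfold fanoFn
    have h1 : (1 : ℝ) - 1 / (C : ℝ) = ((C : ℝ) - 1) / (C : ℝ) := by
      field_simp
    rw [h1, Real.logb, Real.logb, Real.logb, Real.logb,
      Real.log_div hc1.ne' hc0.ne', Real.log_div one_ne_zero hc0.ne', Real.log_one]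
    field_simp
    ring
  refine ⟨hval, hone, fun S hS0 hS1 => ?_⟩
  have hanti := fanoFn_anti C hC
  have hmem : S ∈ Set.Icc (fanoFn C 1) (fanoFn C (1 / (C : ℝ))) := by
    rw [hone, hval]; exact ⟨hS0, hS1⟩
  obtain ⟨P, hP, hfP⟩ := intermediate_value_Icc' hab (fanoFn_continuous C).continuousOn hmem
  exact ⟨P, ⟨hP, hfP⟩, fun Q ⟨hQ, hfQ⟩ => hanti.injOn hQ hP (hfQ.trans hfP.symm)⟩
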